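/- Let M ∈ ℝ^{3×3} be a nonnegative irreducible matrix with diagonal entries m_{11}, m_{22}, m_{33} all strictly less than some λ* > 0. Then ρ(M) < λ* if and only if det(λ* I − M) > 0. -/

import Mathlib

open Matrix

/-- Spectral radius of a real square matrix: the supremum of the absolute values of the
complex roots of its characteristic polynomial (together with 0). -/
noncomputable def specRad {n : ℕ} (M : Matrix (Fin n) (Fin n) ℝ) : ℝ :=
  sSup (insert (0:ℝ)
    ((fun z : ℂ => ‖z‖) '' {μ : ℂ | ((M.map (Complex.ofReal)).charpoly).IsRoot μ}))

lemma my_eval_charpoly {n R : Type*} [Fintype n] [DecidableEq n] [CommRing R]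
    (M : Matrix n n R) (x : R) :
    M.charpoly.eval x = (x • (1 : Matrix n n R) - M).det := by
  rw [Matrix.charpoly, ← Polynomial.coe_evalRingHom, RingHom.map_det]
  congr 1
  ext i j
  by_cases h : i = j <;>
    simp [h, Matrix.charmatrix_apply, Matrix.one_apply, Matrix.smul_apply, Matrix.sub_apply]

lemma key3 (a1 a2 a3 b c d e f g y1 y2 y3 : ℝ)
    (ha1 : 0 < a1) (ha2 : 0 < a2) (ha3 : 0 < a3)
    (hb : 0 ≤ b) (hc : 0 ≤ c) (hd : 0 ≤ d) (he : 0 ≤ e) (hf : 0 ≤ f) (hg : 0 ≤ g)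
    (hy1 : 0 ≤ y1) (hy2 : 0 ≤ y2) (hy3 : 0 ≤ y3)
    (hy : 0 < y1 ∨ 0 < y2 ∨ 0 < y3)
    (h1 : a1 * y1 ≤ b * y2 + c * y3)
    (h2 : a2 * y2 ≤ d * y1 + e * y3)
    (h3 : a3 * y3 ≤ f * y1 + g * y2) :
    a1*a2*a3 - a1*(e*g) - a2*(c*f) - a3*(b*d) - b*(e*f) - c*(d*g) ≤ 0 := by
  have I1 : a1*a2*y1 ≤ b*d*y1 + (b*e + a2*c)*y3 := by
    nlinarith [mul_le_mul_of_nonneg_left h1 ha2.le, mul_le_mul_of_nonneg_left h2 hb]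
  have I2 : a2*a3*y3 ≤ (a2*f + d*g)*y1 + e*g*y3 := by
    nlinarith [mul_le_mul_of_nonneg_left h3 ha2.le, mul_le_mul_of_nonneg_left h2 hg]
  by_cases hy1p : 0 < y1
  · by_cases hy3p : 0 < y3
    · by_cases hbd : a1*a2 - b*d ≤ 0
      · linarith [mul_nonneg (mul_nonneg hb he) hf, mul_nonneg (mul_nonneg hc hd) hg,
          mul_nonneg (mul_nonneg ha1.le he) hg, mul_nonneg (mul_nonneg ha2.le hc) hf,
          mul_le_mul_of_nonneg_left hbd ha3.le]
      · by_cases heg : a2*a3 - e*g ≤ 0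
        · linarith [mul_nonneg (mul_nonneg hb he) hf, mul_nonneg (mul_nonneg hc hd) hg,
            mul_nonneg (mul_nonneg ha2.le hc) hf, mul_nonneg (mul_nonneg ha3.le hb) hd,
            mul_le_mul_of_nonneg_left heg ha1.le]
        · push_neg at hbd heg
          have J1 : (a1*a2 - b*d)*y1 ≤ (b*e + a2*c)*y3 := by linarith
          have J2 : (a2*a3 - e*g)*y3 ≤ (a2*f + d*g)*y1 := by linarith
          have hP := mul_le_mul J1 J2 (mul_nonneg (le_of_lt heg) hy3)
            (mul_nonneg (by positivity : (0:ℝ) ≤ b*e + a2*c) hy3)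
          have hK : (a1*a2 - b*d)*(a2*a3 - e*g) * (y1*y3)
              ≤ (b*e + a2*c)*(a2*f + d*g) * (y1*y3) := by
            calc (a1*a2 - b*d)*(a2*a3 - e*g) * (y1*y3)
                = ((a1*a2 - b*d)*y1) * ((a2*a3 - e*g)*y3) := by ring
              _ ≤ ((b*e + a2*c)*y3) * ((a2*f + d*g)*y1) := hP
              _ = (b*e + a2*c)*(a2*f + d*g) * (y1*y3) := by ring
          have K := (mul_le_mul_iff_of_pos_right (mul_pos hy1p hy3p)).mp hK
          have hA : a2*(a1*a2*a3 - a1*(e*g) - a2*(c*f) - a3*(b*d) - b*(e*f) - c*(d*g)) ≤ 0 := by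
            nlinarith [K]
          by_contra hcon
          push_neg at hcon
          nlinarith [mul_pos ha2 hcon]
    · have hy3z : y3 = 0 := le_antisymm (not_lt.mp hy3p) hy3
      subst hy3z
      have hbd : a1*a2 ≤ b*d := by
        have := (mul_le_mul_iff_of_pos_right hy1p).mp (show (a1*a2)*y1 ≤ (b*d)*y1 by linarith)
        linarith
      linarith [mul_nonneg (mul_nonneg hb he) hf, mul_nonneg (mul_nonneg hc hd) hg,
        mul_nonneg (mul_nonneg ha1.le he) hg, mul_nonneg (mul_nonneg ha2.le hc) hf,
        mul_le_mul_of_nonneg_left hbd ha3.le]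
  · have hy1z : y1 = 0 := le_antisymm (not_lt.mp hy1p) hy1
    subst hy1z
    by_cases hy3p : 0 < y3
    · have heg : a2*a3 ≤ e*g := by
        have := (mul_le_mul_iff_of_pos_right hy3p).mp (show (a2*a3)*y3 ≤ (e*g)*y3 by linarith)
        linarith
      linarith [mul_nonneg (mul_nonneg hb he) hf, mul_nonneg (mul_nonneg hc hd) hg,
        mul_nonneg (mul_nonneg ha2.le hc) hf, mul_nonneg (mul_nonneg ha3.le hb) hd,
        mul_le_mul_of_nonneg_left heg ha1.le]
    · have hy3z : y3 = 0 := le_antisymm (not_lt.mp hy3p) hy3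
      have hy2p : 0 < y2 := by
        rcases hy with h|h|h
        · exact absurd h hy1p
        · exact h
        · exact absurd h hy3p
      nlinarith [h2, mul_pos ha2 hy2p]

/-- for a 3×3 nonnegative irreducible matrix M with diagonal entries below
λ* > 0, the condition ρ(M) < λ* is equivalent to det(λ*I − M) > 0. -/
theorem stmt6 (M : Matrix (Fin 3) (Fin 3) ℝ)
    (hnn : ∀ i j, 0 ≤ M i j)
    (hirr : ∀ i j : Fin 3, Relation.TransGen (fun a b => 0 < M a b) i j)
    (lam : ℝ) (hlam : 0 < lam)
    (hdiag : ∀ i, M i i < lam) :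
    specRad M < lam ↔ 0 < (lam • (1 : Matrix (Fin 3) (Fin 3) ℝ) - M).det := by
  classical
  set p : Polynomial ℝ := M.charpoly with hp
  set pC : Polynomial ℂ := ((M.map (Complex.ofReal)).charpoly) with hpC
  have hpCmap : pC = p.map Complex.ofRealHom := by
    rw [hpC, hp]
    exact Matrix.charpoly_map M Complex.ofRealHom
  have hpC0 : pC ≠ 0 := by
    have : pC.Monic := Matrix.charpoly_monic _
    exact this.ne_zero
  have hfin : (insert (0:ℝ) ((fun z : ℂ => ‖z‖) '' {μ : ℂ | pC.IsRoot μ})).Finite :=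
    ((Polynomial.finite_setOf_isRoot hpC0).image _).insert 0
  have hbdd := hfin.bddAbove
  have hne : (insert (0:ℝ) ((fun z : ℂ => ‖z‖) '' {μ : ℂ | pC.IsRoot μ})).Nonempty :=
    ⟨0, Set.mem_insert _ _⟩
  have hspec : specRad M = sSup (insert (0:ℝ) ((fun z : ℂ => ‖z‖) '' {μ : ℂ | pC.IsRoot μ})) := rfl
  constructor
  · -- forward direction
    intro h
    rw [← my_eval_charpoly]
    by_contra hle
    push_neg at hle
    have hmono : p.Monic := Matrix.charpoly_monic _
    have hdeg : 0 < p.degree := by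
      rw [hp, Matrix.charpoly_degree_eq_dim]
      simp
    have htend := Polynomial.tendsto_atTop_of_leadingCoeff_nonneg p hdeg
      (by rw [hmono.leadingCoeff]; norm_num)
    obtain ⟨X, hX⟩ := ((htend.eventually_ge_atTop 1).and (Filter.eventually_ge_atTop lam)).exists
    obtain ⟨hX1, hXlam⟩ := hX
    have hivt := intermediate_value_Icc hXlam (p.continuous.continuousOn)
    have h0mem : (0:ℝ) ∈ Set.Icc (p.eval lam) (p.eval X) := ⟨hle, by linarith⟩
    obtain ⟨r, hrIcc, hr0⟩ := hivt h0mem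
    have hroot : pC.IsRoot (Complex.ofReal r) := by
      rw [hpCmap]
      exact Polynomial.IsRoot.map (f := Complex.ofRealHom) hr0
    have hmem : ‖(Complex.ofReal r)‖ ∈
        insert (0:ℝ) ((fun z : ℂ => ‖z‖) '' {μ : ℂ | pC.IsRoot μ}) :=
      Set.mem_insert_of_mem _ ⟨Complex.ofReal r, hroot, rfl⟩
    have hle2 : ‖(Complex.ofReal r)‖ ≤ specRad M := by
      rw [hspec]; exact le_csSup hbdd hmem
    have hrlam : lam ≤ r := hrIcc.1
    rw [Complex.norm_real, Real.norm_eq_abs, abs_of_nonneg (by linarith)] at hle2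
    linarith
  · -- backward direction
    intro hdet
    rw [hspec]
    apply (Set.Finite.csSup_lt_iff hfin hne).mpr
    intro x hx
    rcases hx with hx | ⟨μ, hμroot, rfl⟩
    · rwa [hx]
    by_contra hge
    push_neg at hge
    -- extract an eigenvector
    have hdet0 : (μ • (1 : Matrix (Fin 3) (Fin 3) ℂ) - M.map Complex.ofReal).det = 0 := by
      rw [← my_eval_charpoly]
      exact hμroot
    obtain ⟨z, hz0, hzeq⟩ := (Matrix.exists_mulVec_eq_zero_iff).mpr hdet0
    have hMz : (M.map Complex.ofReal).mulVec z = μ • z := by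
      have := hzeq
      rw [Matrix.sub_mulVec, Matrix.smul_mulVec, Matrix.one_mulVec, sub_eq_zero] at this
      exact this.symm
    have hcomp : ∀ i, lam * ‖z i‖ ≤ ∑ j, M i j * ‖z j‖ := by
      intro i
      have h1 : ‖μ * z i‖ = ‖((M.map Complex.ofReal).mulVec z) i‖ := by
        rw [hMz]; simp
      have h2 : ((M.map Complex.ofReal).mulVec z) i = ∑ j, (M i j : ℂ) * z j := by
        simp [Matrix.mulVec, dotProduct, Matrix.map_apply]
      calc lam * ‖z i‖ ≤ ‖μ‖ * ‖z i‖ :=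
            mul_le_mul_of_nonneg_right hge (norm_nonneg _)
        _ = ‖μ * z i‖ := (norm_mul _ _).symm
        _ = ‖∑ j, (M i j : ℂ) * z j‖ := by rw [h1, h2]
        _ ≤ ∑ j, ‖(M i j : ℂ) * z j‖ := norm_sum_le _ _
        _ = ∑ j, M i j * ‖z j‖ := by
            apply Finset.sum_congr rfl
            intro j _
            rw [norm_mul, Complex.norm_real, Real.norm_eq_abs, abs_of_nonneg (hnn i j)]
    set y : Fin 3 → ℝ := fun i => ‖z i‖ with hy
    have hynn : ∀ i, 0 ≤ y i := fun i => norm_nonneg _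
    obtain ⟨i0, hi0⟩ := Function.ne_iff.mp hz0
    have hypos : 0 < y i0 := norm_pos_iff.mpr hi0
    have hsum : ∀ i, lam * y i ≤ M i 0 * y 0 + M i 1 * y 1 + M i 2 * y 2 := by
      intro i
      have := hcomp i
      rwa [Fin.sum_univ_three] at this
    have hor : 0 < y 0 ∨ 0 < y 1 ∨ 0 < y 2 := by
      fin_cases i0
      · exact Or.inl hypos
      · exact Or.inr (Or.inl hypos)
      · exact Or.inr (Or.inr hypos)
    have hk := key3 (lam - M 0 0) (lam - M 1 1) (lam - M 2 2)
      (M 0 1) (M 0 2) (M 1 0) (M 1 2) (M 2 0) (M 2 1) (y 0) (y 1) (y 2)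
      (by linarith [hdiag 0]) (by linarith [hdiag 1]) (by linarith [hdiag 2])
      (hnn 0 1) (hnn 0 2) (hnn 1 0) (hnn 1 2) (hnn 2 0) (hnn 2 1)
      (hynn 0) (hynn 1) (hynn 2) hor
      (by have := hsum 0; linarith)
      (by have := hsum 1; linarith)
      (by have := hsum 2; linarith)
    have hdetval : (lam • (1 : Matrix (Fin 3) (Fin 3) ℝ) - M).det =
        (lam - M 0 0)*(lam - M 1 1)*(lam - M 2 2)
        - (lam - M 0 0)*(M 1 2 * M 2 1) - (lam - M 1 1)*(M 0 2 * M 2 0)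
        - (lam - M 2 2)*(M 0 1 * M 1 0) - M 0 1 * (M 1 2 * M 2 0)
        - M 0 2 * (M 1 0 * M 2 1) := by
      rw [Matrix.det_fin_three]
      simp [Matrix.sub_apply, Matrix.smul_apply, Matrix.one_apply, smul_eq_mul]
      ring
    rw [hdetval] at hdet
    linarith
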